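/- Let $F$ be a field of $\operatorname{char}(F) = 2$, $n \geq 2$, and let $\alpha_1,\dots,\alpha_{n+1} \in F^\times$ be such that the bilinear $(n+1)$-fold Pfister form $\langle\!\langle \alpha_1,\dots,\alpha_{n+1}\rangle\!\rangle$ is anisotropic. Then the anisotropic bilinear $n$-fold Pfister forms $\varphi = \langle\!\langle \alpha_1,\dots,\alpha_{n-2},\alpha_{n-1},\alpha_n\rangle\!\rangle$ and $\psi = \langle\!\langle \alpha_1,\dots,\alpha_{n-2},\alpha_{n-1}+1,\alpha_{n+1}\rangle\!\rangle$ do not share a common $(n-1)$-fold Pfister factor; that is, there are no $c_1,\dots,c_{n-1}, d, e \in F^\times$ such that $\varphi \cong \langle\!\langle c_1,\dots,c_{n-1}, d\rangle\!\rangle$ and $\psi \cong \langle\!\langle c_1,\dots,c_{n-1}, e\rangle\!\rangle$. -/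

import Mathlib

/-- The quadratic form `v ↦ ∑ i j, M i j * v i * v j` on `ι → F` given by a matrix `M`. -/
noncomputable def quadOfMatrix (F : Type) [Field F] {ι : Type} [Fintype ι] [DecidableEq ι]
    (M : Matrix ι ι F) : QuadraticForm F (ι → F) :=
  LinearMap.BilinMap.toQuadraticMap (Matrix.toLinearMap₂' F M)

/-- The (diagonal) Gram matrix of the bilinear `m`-fold Pfister form `⟨⟨a₁,…,aₘ⟩⟩`
(characteristic `2`), indexed by `e : Fin m → Bool`, with diagonal entries the
monomials `∏ aᵢ^{eᵢ}`. -/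
noncomputable def pfisterMatrix (F : Type) [Field F] {m : ℕ} (a : Fin m → F) :
    Matrix (Fin m → Bool) (Fin m → Bool) F :=
  Matrix.diagonal fun e => ∏ i, if e i then a i else 1

/-- Matrix of the binary quadratic form `[a,b] : (x,y) ↦ a x² + x y + b y²`. -/
def binaryMatrix (F : Type) [Field F] (a b : F) : Matrix Bool Bool F :=
  fun i j =>
    match i, j with
    | false, false => a
    | false, true => 1
    | true, false => 0
    | true, true => b

/-- Matrix of the quadratic `(m+1)`-fold Pfister form `⟨⟨a₁,…,aₘ, b]] = ⟨⟨a₁,…,aₘ⟩⟩ ⊗ [1,b]`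
in characteristic `2`. -/
noncomputable def quadPfisterMatrix (F : Type) [Field F] {m : ℕ} (a : Fin m → F) (b : F) :
    Matrix ((Fin m → Bool) × Bool) ((Fin m → Bool) × Bool) F :=
  Matrix.kroneckerMap (· * ·) (pfisterMatrix F a) (binaryMatrix F 1 b)

/-- The quadratic `(m+1)`-fold Pfister form `⟨⟨a₁,…,aₘ, b]]` in characteristic `2`. -/
noncomputable def quadPfister (F : Type) [Field F] {m : ℕ} (a : Fin m → F) (b : F) :
    QuadraticForm F (((Fin m → Bool) × Bool) → F) :=
  quadOfMatrix F (quadPfisterMatrix F a b)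

/-- Matrix of the hyperbolic quadratic form of rank `k`:
`v ↦ ∑ i, v (i, false) * v (i, true)`. -/
def hypMatrix (F : Type) [Field F] (k : ℕ) : Matrix (Fin k × Bool) (Fin k × Bool) F :=
  fun x y => if x.1 = y.1 ∧ x.2 = false ∧ y.2 = true then 1 else 0

/-- Witt equivalence of quadratic forms: the two forms become isometric after adding
suitable hyperbolic forms. -/
def WittEquivalent (F : Type) [Field F] {V₁ V₂ : Type} [AddCommGroup V₁] [Module F V₁]
    [AddCommGroup V₂] [Module F V₂] (q₁ : QuadraticForm F V₁) (q₂ : QuadraticForm F V₂) :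
    Prop :=
  ∃ k l : ℕ, QuadraticMap.Equivalent
    (q₁.prod (quadOfMatrix F (hypMatrix F k))) (q₂.prod (quadOfMatrix F (hypMatrix F l)))

/-- The symmetric bilinear form given by the matrix `M` is anisotropic:
`vᵀ M v ≠ 0` for all `v ≠ 0`. -/
def Matrix.BilinAnisotropic {F : Type} [Field F] {ι : Type} [Fintype ι]
    (M : Matrix ι ι F) : Prop :=
  ∀ v : ι → F, v ≠ 0 → dotProduct v (M.mulVec v) ≠ 0

/-- The bilinear forms given by the matrices `M` and `N` are isometric:
`N = Pᵀ M P` for some invertible matrix `P`. -/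
def Matrix.BilinIsometric {F : Type} [Field F] {ι : Type} [Fintype ι] [DecidableEq ι]
    (M N : Matrix ι ι F) : Prop :=
  ∃ P : Matrix ι ι F, IsUnit P.det ∧ N = P.transpose * M * P


/- ===================== auxiliary machinery ===================== -/
section Aux
set_option linter.unusedSectionVars false
set_option maxHeartbeats 1000000
open Finset Fin Matrix

variable {F : Type} [Field F] [CharP F 2]

lemma addEq {x y : F} (h : x + y = 0) : x = y := by
  rw [add_eq_zero_iff_eq_neg] at h; rw [h, CharTwo.neg_eq]

section transfer
variable {ι : Type} [Fintype ι] [DecidableEq ι]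

lemma addEqV {w₁ w₂ : ι → F} (h : w₁ + w₂ = 0) : w₁ = w₂ :=
  funext fun i => addEq (congrFun h i)

lemma dot_congr (M P : Matrix ι ι F) (u v : ι → F) :
    dotProduct u ((Pᵀ * M * P).mulVec v)
      = dotProduct (P.mulVec u) (M.mulVec (P.mulVec v)) := by
  rw [← Matrix.mulVec_mulVec, ← Matrix.mulVec_mulVec, Matrix.dotProduct_mulVec,
    Matrix.dotProduct_mulVec (P.mulVec u), Matrix.vecMul_transpose]
  rw [← Matrix.dotProduct_mulVec]

lemma q_add (M : Matrix ι ι F) (hs : Mᵀ = M) (u v : ι → F) :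
    dotProduct (u + v) (M.mulVec (u + v))
      = dotProduct u (M.mulVec u) + dotProduct v (M.mulVec v) := by
  have huv : dotProduct v (M.mulVec u) = dotProduct u (M.mulVec v) := by
    rw [Matrix.dotProduct_mulVec v, ← Matrix.mulVec_transpose, hs, dotProduct_comm]
  have h2 : (2 : F) = 0 := CharTwo.two_eq_zero
  rw [Matrix.mulVec_add, dotProduct_add, add_dotProduct, add_dotProduct,
    huv]
  ring_nf
  rw [h2]
  ring

lemma aniso_congr {M N P : Matrix ι ι F} (hM : M.BilinAnisotropic) (hP : IsUnit P.det)
    (hN : N = Pᵀ * M * P) : N.BilinAnisotropic := by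
  intro v hv
  rw [hN, dot_congr]
  refine hM _ (fun h => hv ?_)
  have := congrArg (P⁻¹.mulVec) h
  rwa [Matrix.mulVec_mulVec, Matrix.nonsing_inv_mul _ hP, Matrix.one_mulVec,
    Matrix.mulVec_zero] at this

lemma transfer {M N P : Matrix ι ι F} (hM : M.BilinAnisotropic) (hs : Mᵀ = M)
    (hN : N = Pᵀ * M * P)
    (u₁ v₁ u₂ v₂ : ι → F)
    (hu : dotProduct u₁ (M.mulVec u₁) = dotProduct u₂ (N.mulVec u₂))
    (hv : dotProduct v₁ (M.mulVec v₁) = dotProduct v₂ (N.mulVec v₂)) :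
    dotProduct u₁ (M.mulVec v₁) = dotProduct u₂ (N.mulVec v₂) := by
  have key : ∀ w₁ w₂ : ι → F,
      dotProduct w₁ (M.mulVec w₁) = dotProduct w₂ (N.mulVec w₂) →
      w₁ = P.mulVec w₂ := by
    intro w₁ w₂ h
    rw [hN, dot_congr] at h
    by_contra hne
    have hnz : w₁ + P.mulVec w₂ ≠ 0 := fun h0 => hne (addEqV h0)
    refine hM _ hnz ?_
    rw [q_add M hs, h, CharTwo.add_self_eq_zero]
  rw [hN, dot_congr, ← key u₁ u₂ hu, ← key v₁ v₂ hv]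
end transfer

variable (F) in
/-- the subfield of squares in char 2 -/
def sqK : Subfield F where
  carrier := Set.range (· ^ 2)
  mul_mem' := by rintro _ _ ⟨a, rfl⟩ ⟨b, rfl⟩; exact ⟨a * b, by ring⟩
  one_mem' := ⟨1, one_pow 2⟩
  add_mem' := by rintro _ _ ⟨a, rfl⟩ ⟨b, rfl⟩; exact ⟨a + b, CharTwo.add_sq a b⟩
  zero_mem' := ⟨0, by ring⟩
  neg_mem' := by rintro _ ⟨a, rfl⟩; exact ⟨a, by rw [CharTwo.neg_eq]⟩
  inv_mem' := by rintro _ ⟨a, rfl⟩; exact ⟨a⁻¹, by simp [inv_pow]⟩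

lemma sqK_smul (k : sqK F) (x : F) : k • x = (k : F) * x := rfl

lemma sqK_coe (k : sqK F) : ∃ t : F, (k : F) = t ^ 2 := by
  obtain ⟨t, ht⟩ := k.2; exact ⟨t, ht.symm⟩

lemma mem_sqK (t : F) : t ^ 2 ∈ sqK F := ⟨t, rfl⟩

lemma li_of_aniso {ι : Type} [Fintype ι] [DecidableEq ι] {a : ι → F}
    (h : (Matrix.diagonal a).BilinAnisotropic) : LinearIndependent (sqK F) a := by
  rw [Fintype.linearIndependent_iff]
  intro g hg i
  by_contra hgi
  choose t ht using fun i => sqK_coe (g i)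
  have hta : ∀ j, (g j : F) = t j ^ 2 := ht
  have htne : (t : ι → F) ≠ 0 := by
    intro h0
    apply hgi
    have : (g i : F) = 0 := by rw [hta i, congrFun h0 i]; simp
    exact_mod_cast Subtype.ext this
  refine h t htne ?_
  have : dotProduct t ((Matrix.diagonal a).mulVec t) = ∑ j, a j * t j * t j := by
    unfold dotProduct
    refine Finset.sum_congr rfl fun j _ => ?_
    rw [Matrix.mulVec_diagonal]; ring
  rw [this, ← hg]
  refine Finset.sum_congr rfl fun j _ => ?_
  rw [sqK_smul, hta j]; ring

def prodIf {n : ℕ} (a : Fin n → F) (e : Fin n → Bool) : F :=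
  ∏ i, if e i then a i else 1

lemma prodIf_snoc {n : ℕ} (a : Fin (n+1) → F) (e : Fin n → Bool) (b : Bool) :
    prodIf a (Fin.snoc e b) = prodIf (fun i => a i.castSucc) e * (if b then a (Fin.last n) else 1) := by
  unfold prodIf
  rw [Fin.prod_univ_castSucc]
  simp [Fin.snoc_castSucc, Fin.snoc_last]

lemma prodIf_false {n : ℕ} (a : Fin n → F) : prodIf a (fun _ => false) = 1 := by
  simp [prodIf]

lemma prodIf_single {n : ℕ} (a : Fin n → F) (k : Fin n) :
    prodIf a (fun i => decide (i = k)) = a k := by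
  unfold prodIf
  rw [show (fun i => if decide (i = k) = true then a i else 1) = fun i => if i = k then a i else 1 by
    funext i; by_cases h : i = k <;> simp [h]]
  simp [Finset.prod_ite_eq']

def snocEquivB (n : ℕ) : ((Fin n → Bool) × Bool) ≃ (Fin (n+1) → Bool) where
  toFun := fun p => Fin.snoc p.1 p.2
  invFun := fun e => (Fin.init e, e (Fin.last n))
  left_inv := fun p => by simp [Fin.init_snoc, Fin.snoc_last]
  right_inv := fun e => by simp [Fin.snoc_init_self]

lemma sum_snocB {n : ℕ} {M : Type} [AddCommMonoid M] (f : (Fin (n+1) → Bool) → M) :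
    ∑ e, f e = ∑ e : Fin n → Bool, (f (Fin.snoc e false) + f (Fin.snoc e true)) := by
  rw [← (snocEquivB n).sum_comp f, Fintype.sum_prod_type]
  refine Finset.sum_congr rfl fun e _ => ?_
  rw [Fintype.sum_bool]
  exact add_comm _ _

lemma dot_diag {ι : Type} [Fintype ι] [DecidableEq ι] (a v w : ι → F) :
    dotProduct v ((Matrix.diagonal a).mulVec w) = ∑ i, a i * v i * w i := by
  unfold dotProduct
  refine Finset.sum_congr rfl fun i _ => ?_
  rw [Matrix.mulVec_diagonal]; ring

lemma pfister_eq {n : ℕ} (a : Fin n → F) : pfisterMatrix F a = Matrix.diagonal (prodIf a) := rfl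

lemma sum_delta_mul {ι : Type} [Fintype ι] [DecidableEq ι] (a x : ι → F) (k : ι) :
    ∑ i, a i * (if i = k then (1:F) else 0) * x i = a k * x k := by
  rw [Finset.sum_eq_single k]
  · simp
  · intro b _ hb; simp [hb]
  · intro h; exact absurd (Finset.mem_univ k) h

lemma q_delta {ι : Type} [Fintype ι] [DecidableEq ι] (a : ι → F) (k : ι) :
    ∑ i, a i * (if i = k then (1:F) else 0) * (if i = k then (1:F) else 0) = a k := by
  rw [sum_delta_mul]; simp

variable {m : ℕ}

lemma mul_add_sq (P a b : F) : P * (a+b) * (a+b) = P*(a*a) + P*(b*b) := by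
  have h := CharTwo.add_sq a b
  linear_combination P * h

lemma aniso_phi (α : Fin (m+3) → F) (haniso : (pfisterMatrix F α).BilinAnisotropic)
    (h : m + 2 ≤ m + 3) :
    (pfisterMatrix F (fun i : Fin (m+2) => α (Fin.castLE h i))).BilinAnisotropic := by
  intro v hv hq
  set w : (Fin (m+3) → Bool) → F := fun e => if e (Fin.last (m+2)) then 0 else v (Fin.init e)
    with hwdef
  have hwne : w ≠ 0 := by
    obtain ⟨f, hf⟩ := Function.ne_iff.mp hv
    refine Function.ne_iff.mpr ⟨Fin.snoc f false, ?_⟩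
    simpa [hwdef, Fin.snoc_last, Fin.init_snoc] using hf
  apply haniso w hwne
  rw [pfister_eq, dot_diag, sum_snocB]
  rw [pfister_eq, dot_diag] at hq
  rw [← hq]
  refine Finset.sum_congr rfl fun e _ => ?_
  have h1 : w (Fin.snoc e false) = v e := by simp [hwdef, Fin.snoc_last, Fin.init_snoc]
  have h2 : w (Fin.snoc e true) = 0 := by simp [hwdef, Fin.snoc_last]
  rw [h1, h2, prodIf_snoc]
  have : (fun i : Fin (m+2) => α i.castSucc) = (fun i : Fin (m+2) => α (Fin.castLE h i)) := rfl
  rw [this]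
  simp only [Bool.false_eq_true, if_false, mul_one]
  ring

lemma aniso_psi (α : Fin (m+3) → F) (haniso : (pfisterMatrix F α).BilinAnisotropic)
    (h' : m ≤ m + 3) (hm : m < m + 3) (hm2 : m + 2 < m + 3) :
    (pfisterMatrix F (Fin.snoc (Fin.snoc (fun i : Fin m => α (Fin.castLE h' i))
      (α ⟨m, hm⟩ + 1)) (α ⟨m + 2, hm2⟩))).BilinAnisotropic := by
  intro v hv hq
  set w : (Fin (m+3) → Bool) → F := fun e =>
    if Fin.init e (Fin.last (m+1)) then 0
    else if Fin.init (Fin.init e) (Fin.last m)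
      then v (Fin.snoc (Fin.snoc (Fin.init (Fin.init (Fin.init e))) true) (e (Fin.last (m+2))))
      else v (Fin.snoc (Fin.snoc (Fin.init (Fin.init (Fin.init e))) false) (e (Fin.last (m+2))))
         + v (Fin.snoc (Fin.snoc (Fin.init (Fin.init (Fin.init e))) true) (e (Fin.last (m+2))))
    with hwdef
  have hwe : ∀ (S : Fin m → Bool) (x y z : Bool),
      w (Fin.snoc (Fin.snoc (Fin.snoc S x) y) z)
        = if y then 0 else
          (if x then v (Fin.snoc (Fin.snoc S true) z)
           else v (Fin.snoc (Fin.snoc S false) z) + v (Fin.snoc (Fin.snoc S true) z)) := by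
    intro S x y z
    simp [hwdef, Fin.init_snoc, Fin.snoc_last]
  have hwne : w ≠ 0 := by
    intro hw0
    apply hv
    funext f
    have hf : f = Fin.snoc (Fin.snoc (Fin.init (Fin.init f)) (Fin.init f (Fin.last m)))
        (f (Fin.last (m+1))) := by
      conv_lhs => rw [← Fin.snoc_init_self f, ← Fin.snoc_init_self (Fin.init f)]
    set S := Fin.init (Fin.init f)
    set z := f (Fin.last (m+1))
    have e1 : w (Fin.snoc (Fin.snoc (Fin.snoc S true) false) z) = 0 := by rw [hw0]; rfl
    have e2 : w (Fin.snoc (Fin.snoc (Fin.snoc S false) false) z) = 0 := by rw [hw0]; rfl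
    rw [hwe] at e1 e2
    simp only [if_false, if_true, Bool.false_eq_true] at e1 e2
    have e3 : v (Fin.snoc (Fin.snoc S false) z) = 0 := by
      have := e2
      rw [e1, add_zero] at this
      exact this
    rw [hf]
    cases hx : Fin.init f (Fin.last m)
    · rw [e3]; rfl
    · rw [e1]; rfl
  apply haniso w hwne
  rw [pfister_eq, dot_diag, sum_snocB]
  rw [pfister_eq, dot_diag, sum_snocB] at hq
  rw [← hq]
  rw [sum_snocB, sum_snocB]
  conv_rhs => rw [sum_snocB]
  refine Finset.sum_congr rfl fun S _ => ?_
  have c1 : α ((Fin.last m).castSucc.castSucc) = α ⟨m, hm⟩ := rfl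
  have c2 : α (Fin.last (m+2)) = α ⟨m+2, hm2⟩ := rfl
  have c3 : (fun i : Fin m => α i.castSucc.castSucc.castSucc) = (fun i => α (Fin.castLE h' i)) := rfl
  simp only [hwe, prodIf_snoc, Fin.snoc_castSucc, Fin.snoc_last, if_true, if_false,
    Bool.false_eq_true, Bool.true_eq_false, mul_zero, zero_mul, mul_one, one_mul, add_zero,
    zero_add, c1, c2, c3]
  rw [mul_add_sq, mul_add_sq]
  ring

-- span section, to be inserted before `end Aux`
section Span
open Finset Fin Matrix Submodule
variable {F : Type} [Field F] [CharP F 2] {m : ℕ}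

lemma val_mem {ι : Type} [Fintype ι] (a : ι → F) {V : Submodule (sqK F) F}
    (ha : ∀ i, a i ∈ V) (x : ι → F) : (∑ i, a i * x i * x i) ∈ V := by
  refine Submodule.sum_mem _ fun i _ => ?_
  have : a i * x i * x i = (⟨x i ^ 2, mem_sqK (x i)⟩ : sqK F) • a i := by
    rw [sqK_smul]; show _ = x i ^ 2 * a i; ring
  rw [this]
  exact Submodule.smul_mem _ _ (ha i)

def tripEquiv (m : ℕ) : ((Fin (m+1) → Bool) × Bool × Bool) ≃ (Fin (m+3) → Bool) where
  toFun p := Fin.snoc (Fin.snoc p.1 p.2.1) p.2.2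
  invFun e := (Fin.init (Fin.init e), Fin.init e (Fin.last (m+1)), e (Fin.last (m+2)))
  left_inv p := by
    obtain ⟨R, x, y⟩ := p
    simp [Fin.init_snoc, Fin.snoc_last]
  right_inv e := by simp [Fin.init_snoc, Fin.snoc_last, Fin.snoc_init_self]

lemma dot_delta {ι : Type} [Fintype ι] [DecidableEq ι] (a x : ι → F) (k : ι) :
    dotProduct (fun i => if i = k then (1:F) else 0)
      ((Matrix.diagonal a).mulVec x) = a k * x k := by
  rw [dot_diag, Finset.sum_eq_single k]
  · simp
  · intro b _ hb; simp [hb]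
  · simp

/-- the main span-theoretic lemma: the common Pfister factor's value module is the span `U`
of the monomials in `α₀,…,αₘ`, hence contains `αₘ + 1`. -/
lemma alpha_mem_W (h : m+2 ≤ m+3) (h' : m ≤ m+3) (hm : m < m+3) (hm2 : m+2 < m+3)
    (α : Fin (m+3) → F) (haniso : (pfisterMatrix F α).BilinAnisotropic)
    (c : Fin (m+1) → F) (d e : F)
    (P Q : Matrix (Fin (m+2) → Bool) (Fin (m+2) → Bool) F)
    (hPdet : IsUnit P.det) (hQdet : IsUnit Q.det)
    (hNφ : pfisterMatrix F (Fin.snoc c d)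
      = Pᵀ * pfisterMatrix F (fun i : Fin (m+2) => α (Fin.castLE h i)) * P)
    (hNψ : pfisterMatrix F (Fin.snoc c e)
      = Qᵀ * pfisterMatrix F (Fin.snoc (Fin.snoc (fun i : Fin m => α (Fin.castLE h' i))
          (α ⟨m, hm⟩ + 1)) (α ⟨m+2, hm2⟩)) * Q) :
    ∃ t : (Fin (m+1) → Bool) → F,
      ∑ R, prodIf c R * t R * t R = α ⟨m, hm⟩ + 1 := by
  classical
  set αφ : Fin (m+2) → F := fun i => α (Fin.castLE h i) with hαφ
  set ψp : Fin (m+2) → F := Fin.snoc (Fin.snoc (fun i : Fin m => α (Fin.castLE h' i))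
      (α ⟨m, hm⟩ + 1)) (α ⟨m+2, hm2⟩) with hψp
  have hli3 : LinearIndependent (sqK F) (prodIf α : (Fin (m+3) → Bool) → F) :=
    li_of_aniso haniso
  set g : ((Fin (m+1) → Bool) × Bool × Bool) → F :=
    fun p => prodIf α (Fin.snoc (Fin.snoc p.1 p.2.1) p.2.2) with hg
  have hlig : LinearIndependent (sqK F) g := hli3.comp (tripEquiv m) (tripEquiv m).injective
  set gU : (Fin (m+1) → Bool) → F := fun R => g (R, false, false) with hgU
  set gA : (Fin (m+1) → Bool) → F := fun R => g (R, true, false) with hgA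
  set gB : (Fin (m+1) → Bool) → F := fun R => g (R, false, true) with hgB
  have hliU : LinearIndependent (sqK F) gU :=
    hlig.comp (fun R => (R, false, false)) (fun a b hab => congrArg Prod.fst hab)
  set U : Submodule (sqK F) F := Submodule.span (sqK F) (Set.range gU) with hU
  set A : Submodule (sqK F) F := Submodule.span (sqK F) (Set.range gA) with hA
  set B : Submodule (sqK F) F := Submodule.span (sqK F) (Set.range gB) with hB
  haveI : FiniteDimensional (sqK F) U := FiniteDimensional.span_of_finite _ (Set.finite_range gU)
  have hfrU : Module.finrank (sqK F) U = 2 ^ (m+1) := by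
    rw [hU, finrank_span_eq_card hliU]
    simp [Fintype.card_fun]
  -- the c-monomials
  set cmon : (Fin (m+1) → Bool) → F := fun R => prodIf (Fin.snoc c d) (Fin.snoc R false)
    with hcmondef
  have hsnocc : (fun i : Fin (m+1) => (Fin.snoc c d : Fin (m+2) → F) i.castSucc) = c := by
    funext i; rw [Fin.snoc_castSucc]
  have hsnocc' : (fun i : Fin (m+1) => (Fin.snoc c e : Fin (m+2) → F) i.castSucc) = c := by
    funext i; rw [Fin.snoc_castSucc]
  have hcmon : ∀ R, cmon R = prodIf c R := by
    intro R; rw [hcmondef]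
    show prodIf (Fin.snoc c d) (Fin.snoc R false) = _
    rw [prodIf_snoc, hsnocc]; simp
  have hcmon' : ∀ R, prodIf (Fin.snoc c e) (Fin.snoc R false) = cmon R := by
    intro R; rw [prodIf_snoc, hsnocc', hcmon]; simp
  -- anisotropy of the two n-fold forms and their congruates
  have hMφa : (pfisterMatrix F αφ).BilinAnisotropic := aniso_phi α haniso h
  have hMψa : (pfisterMatrix F ψp).BilinAnisotropic := aniso_psi α haniso h' hm hm2
  have hNφa : (pfisterMatrix F (Fin.snoc c d)).BilinAnisotropic :=
    aniso_congr hMφa hPdet hNφ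
  have hlicd : LinearIndependent (sqK F) (prodIf (Fin.snoc c d)) := li_of_aniso hNφa
  have hsnocinj : Function.Injective (fun R : Fin (m+1) → Bool => (Fin.snoc R false : Fin (m+2) → Bool)) := by
    intro a b hab
    have := congrArg Fin.init hab
    simpa [Fin.init_snoc] using this
  have hlicmon : LinearIndependent (sqK F) cmon := hlicd.comp _ hsnocinj
  set W : Submodule (sqK F) F := Submodule.span (sqK F) (Set.range cmon) with hW
  have hfrW : Module.finrank (sqK F) W = 2 ^ (m+1) := by
    rw [hW, finrank_span_eq_card hlicmon]
    simp [Fintype.card_fun]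
  -- membership of diagonal entries in U ⊔ A resp. U ⊔ B
  have hVφmem : ∀ f : Fin (m+2) → Bool, prodIf αφ f ∈ U ⊔ A := by
    intro f
    have key : ∀ (R) (b : Bool), prodIf αφ (Fin.snoc R b) = g (R, b, false) := by
      intro R b
      show _ = prodIf α (Fin.snoc (Fin.snoc R b) false)
      rw [prodIf_snoc (a := α)]
      simp only [Bool.false_eq_true, if_false, mul_one]
      rfl
    rw [← Fin.snoc_init_self f, key]
    cases hb : f (Fin.last (m+1))
    · exact Submodule.mem_sup_left (Submodule.subset_span ⟨Fin.init f, rfl⟩)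
    · exact Submodule.mem_sup_right (Submodule.subset_span ⟨Fin.init f, rfl⟩)
  have c1 : α ((Fin.last m).castSucc.castSucc) = α ⟨m, hm⟩ := rfl
  have c2 : α (Fin.last (m+2)) = α ⟨m+2, hm2⟩ := rfl
  have c3 : (fun i : Fin m => α i.castSucc.castSucc.castSucc)
      = (fun i => α (Fin.castLE h' i)) := rfl
  have hg1 : ∀ (S : Fin m → Bool) (b z : Bool),
      g (Fin.snoc S b, false, z)
        = prodIf (fun i => α (Fin.castLE h' i)) S * (if b then α ⟨m, hm⟩ else 1)
            * (if z then α ⟨m+2, hm2⟩ else 1) := by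
    intro S b z
    show prodIf α (Fin.snoc (Fin.snoc (Fin.snoc S b) false) z) = _
    simp only [prodIf_snoc, Fin.snoc_castSucc, Fin.snoc_last, c1, c2, c3,
      Bool.false_eq_true, if_false, mul_one]
  have hψ1 : ∀ (S : Fin m → Bool) (x z : Bool),
      prodIf ψp (Fin.snoc (Fin.snoc S x) z)
        = prodIf (fun i => α (Fin.castLE h' i)) S * (if x then α ⟨m, hm⟩ + 1 else 1)
            * (if z then α ⟨m+2, hm2⟩ else 1) := by
    intro S x z
    rw [hψp]
    simp only [prodIf_snoc, Fin.snoc_castSucc, Fin.snoc_last]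
  have m1 : ∀ (R : Fin (m+1) → Bool) (z : Bool), g (R, false, z) ∈ U ⊔ B := by
    intro R z
    cases z
    · exact Submodule.mem_sup_left (Submodule.subset_span ⟨R, rfl⟩)
    · exact Submodule.mem_sup_right (Submodule.subset_span ⟨R, rfl⟩)
  have hVψmem : ∀ f : Fin (m+2) → Bool, prodIf ψp f ∈ U ⊔ B := by
    intro f
    have hf : f = Fin.snoc (Fin.snoc (Fin.init (Fin.init f)) (Fin.init f (Fin.last m)))
        (f (Fin.last (m+1))) := by
      conv_lhs => rw [← Fin.snoc_init_self f, ← Fin.snoc_init_self (Fin.init f)]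
    rw [hf, hψ1]
    set S := Fin.init (Fin.init f)
    set z := f (Fin.last (m+1))
    cases hx : Fin.init f (Fin.last m)
    · have h0 := m1 (Fin.snoc S false) z
      rw [hg1] at h0
      simpa using h0
    · have h0 := m1 (Fin.snoc S false) z
      have h1 := m1 (Fin.snoc S true) z
      rw [hg1] at h0 h1
      have heq : prodIf (fun i => α (Fin.castLE h' i)) S * (if true then α ⟨m, hm⟩ + 1 else 1)
            * (if z then α ⟨m+2, hm2⟩ else 1)
          = prodIf (fun i => α (Fin.castLE h' i)) S * (if false then α ⟨m, hm⟩ else 1)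
              * (if z then α ⟨m+2, hm2⟩ else 1)
            + prodIf (fun i => α (Fin.castLE h' i)) S * (if true then α ⟨m, hm⟩ else 1)
              * (if z then α ⟨m+2, hm2⟩ else 1) := by
        simp only [if_true, if_false, Bool.false_eq_true, mul_one]
        ring
      rw [heq]
      exact Submodule.add_mem _ h0 h1
  -- W is contained in both
  have hWsubφ : W ≤ U ⊔ A := by
    rw [hW, Submodule.span_le]
    rintro _ ⟨R, rfl⟩
    have hval : cmon R
        = dotProduct (P.mulVec (fun i => if i = Fin.snoc R false then (1:F) else 0))
            ((pfisterMatrix F αφ).mulVec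
              (P.mulVec (fun i => if i = Fin.snoc R false then (1:F) else 0))) := by
      have e1 : cmon R = dotProduct (fun i => if i = Fin.snoc R false then (1:F) else 0)
          ((pfisterMatrix F (Fin.snoc c d)).mulVec
            (fun i => if i = Fin.snoc R false then (1:F) else 0)) := by
        rw [pfister_eq, dot_delta]
        simp [hcmondef, prodIf]
      rw [e1, hNφ, dot_congr]
    rw [hval, pfister_eq, dot_diag]
    exact val_mem _ hVφmem _
  have hWsubψ : W ≤ U ⊔ B := by
    rw [hW, Submodule.span_le]
    rintro _ ⟨R, rfl⟩
    have hval : cmon R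
        = dotProduct (Q.mulVec (fun i => if i = Fin.snoc R false then (1:F) else 0))
            ((pfisterMatrix F ψp).mulVec
              (Q.mulVec (fun i => if i = Fin.snoc R false then (1:F) else 0))) := by
      have e1 : cmon R = dotProduct (fun i => if i = Fin.snoc R false then (1:F) else 0)
          ((pfisterMatrix F (Fin.snoc c e)).mulVec
            (fun i => if i = Fin.snoc R false then (1:F) else 0)) := by
        rw [pfister_eq, dot_delta, ← hcmon' R]
        simp [prodIf]
      rw [e1, hNψ, dot_congr]
    rw [hval, pfister_eq, dot_diag]
    exact val_mem _ hVψmem _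
  -- the intersection is U
  have hrangeU : Set.range gU = g '' {p | p.2.1 = false ∧ p.2.2 = false} := by
    ext y
    constructor
    · rintro ⟨R, rfl⟩; exact ⟨(R, false, false), ⟨rfl, rfl⟩, rfl⟩
    · rintro ⟨⟨R, x, z⟩, ⟨hx, hz⟩, rfl⟩
      dsimp at hx hz
      subst hx; subst hz
      exact ⟨R, rfl⟩
  have hrangeA : Set.range gA = g '' {p | p.2.1 = true ∧ p.2.2 = false} := by
    ext y
    constructor
    · rintro ⟨R, rfl⟩; exact ⟨(R, true, false), ⟨rfl, rfl⟩, rfl⟩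
    · rintro ⟨⟨R, x, z⟩, ⟨hx, hz⟩, rfl⟩
      dsimp at hx hz
      subst hx; subst hz
      exact ⟨R, rfl⟩
  have hrangeB : Set.range gB = g '' {p | p.2.1 = false ∧ p.2.2 = true} := by
    ext y
    constructor
    · rintro ⟨R, rfl⟩; exact ⟨(R, false, true), ⟨rfl, rfl⟩, rfl⟩
    · rintro ⟨⟨R, x, z⟩, ⟨hx, hz⟩, rfl⟩
      dsimp at hx hz
      subst hx; subst hz
      exact ⟨R, rfl⟩
  have hdisj : Disjoint A (U ⊔ B) := by
    have hUB : U ⊔ B = Submodule.span (sqK F)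
        (g '' ({p | p.2.1 = false ∧ p.2.2 = false} ∪ {p | p.2.1 = false ∧ p.2.2 = true})) := by
      rw [Set.image_union, Submodule.span_union, hU, hB, hrangeU, hrangeB]
    rw [hA, hrangeA, hUB]
    refine hlig.disjoint_span_image ?_
    rw [Set.disjoint_left]
    rintro ⟨R, x, z⟩ ⟨hx, hz⟩ hmem
    rcases hmem with ⟨h1, _⟩ | ⟨h1, _⟩ <;> (dsimp at hx h1; rw [hx] at h1; exact Bool.noConfusion h1)
  have hmeet : W ≤ U := by
    intro x hx
    have hx1 : x ∈ U ⊔ A := hWsubφ hx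
    have hx2 : x ∈ U ⊔ B := hWsubψ hx
    obtain ⟨u, hu, a, ha, hua⟩ := Submodule.mem_sup.mp hx1
    have h2 : (2:F) = 0 := CharTwo.two_eq_zero
    have hax : a = x + u := by linear_combination hua - u * h2
    have haUB : a ∈ U ⊔ B := by
      rw [hax]
      exact Submodule.add_mem _ hx2 (Submodule.mem_sup_left hu)
    have ha0 : a = 0 := Submodule.disjoint_def.mp hdisj a ha haUB
    rw [← hua, ha0, add_zero]
    exact hu
  have hWU : W = U :=
    Submodule.eq_of_le_of_finrank_le hmeet (by rw [hfrU, hfrW])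
  -- αₘ + 1 belongs to U = W
  have hmem : α ⟨m, hm⟩ + 1 ∈ W := by
    rw [hWU]
    have h1U : (1:F) ∈ U := by
      have hv : gU (fun _ => false) = 1 := by
        show prodIf α (Fin.snoc (Fin.snoc (fun _ => false) false) false) = 1
        simp only [prodIf_snoc, Bool.false_eq_true, if_false, mul_one]
        exact prodIf_false _
      exact hv ▸ Submodule.subset_span ⟨_, rfl⟩
    have hmU : α ⟨m, hm⟩ ∈ U := by
      have hv : gU (fun i => decide (i = Fin.last m)) = α ⟨m, hm⟩ := by
        show prodIf α (Fin.snoc (Fin.snoc (fun i => decide (i = Fin.last m)) false) false) = _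
        simp only [prodIf_snoc, Bool.false_eq_true, if_false, mul_one]
        rw [prodIf_single]
        exact c1
      exact hv ▸ Submodule.subset_span ⟨_, rfl⟩
    exact Submodule.add_mem _ hmU h1U
  rw [hW] at hmem
  obtain ⟨k, hk⟩ := (mem_span_range_iff_exists_fun (sqK F)).mp hmem
  choose t ht using fun R => sqK_coe (k R)
  refine ⟨t, ?_⟩
  rw [← hk]
  refine Finset.sum_congr rfl fun R _ => ?_
  rw [sqK_smul, ht R, hcmon R]
  ring

end Span

section Final
open Finset Fin Matrix
variable {F : Type} [Field F] [CharP F 2] {m : ℕ}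

lemma prodIf_snoc_false {n : ℕ} (a : Fin n → F) (y : F) (R : Fin n → Bool) :
    prodIf (Fin.snoc a y) (Fin.snoc R false) = prodIf a R := by
  rw [prodIf_snoc]
  simp only [Bool.false_eq_true, if_false, mul_one]
  congr 1
  funext i
  rw [Fin.snoc_castSucc]

lemma q_two {ι : Type} [Fintype ι] [DecidableEq ι] (a : ι → F) {j k : ι} (hjk : j ≠ k) :
    dotProduct (fun i => (if i = j then (1:F) else 0) + (if i = k then 1 else 0))
      ((Matrix.diagonal a).mulVec
        (fun i => (if i = j then (1:F) else 0) + (if i = k then 1 else 0)))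
      = a j + a k := by
  rw [dot_diag]
  have key : ∀ i, a i * ((if i = j then (1:F) else 0) + (if i = k then 1 else 0))
      * ((if i = j then (1:F) else 0) + (if i = k then 1 else 0))
      = (if i = j then a i else 0) + (if i = k then a i else 0) := by
    intro i
    by_cases h1 : i = j <;> by_cases h2 : i = k
    · subst h1; exact absurd h2 hjk
    · subst h1; simp [hjk]
    · subst h2; simp [Ne.symm hjk]
    · simp [h1, h2]
  simp only [key]
  rw [Finset.sum_add_distrib, Finset.sum_ite_eq' Finset.univ j a,
    Finset.sum_ite_eq' Finset.univ k a]
  simp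

end Final

end Aux

/-- Let `F` be a field of characteristic `2`, `n = m+2 ≥ 2`, and
`α₁,…,α_{n+1} ∈ F^×` such that the bilinear `(n+1)`-fold Pfister form
`⟨⟨α₁,…,α_{n+1}⟩⟩` is anisotropic. Then the anisotropic bilinear `n`-fold Pfister forms
`φ = ⟨⟨α₁,…,α_{n-1},αₙ⟩⟩` and `ψ = ⟨⟨α₁,…,α_{n-2},α_{n-1}+1,α_{n+1}⟩⟩` do not share a
common `(n-1)`-fold Pfister factor. -/
theorem bilinPfister_not_linked_of_anisotropic (F : Type) [Field F] [CharP F 2] (m : ℕ)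
    (α : Fin (m + 3) → F) (hα : ∀ i, α i ≠ 0)
    (haniso : (pfisterMatrix F α).BilinAnisotropic) :
    (pfisterMatrix F (fun i : Fin (m + 2) => α (Fin.castLE (by omega) i))).BilinAnisotropic ∧
    (pfisterMatrix F
        (Fin.snoc (Fin.snoc (fun i : Fin m => α (Fin.castLE (by omega) i))
          (α ⟨m, by omega⟩ + 1)) (α ⟨m + 2, by omega⟩))).BilinAnisotropic ∧
    ¬ ∃ c : Fin (m + 1) → F, (∀ i, c i ≠ 0) ∧
        ∃ d e : F, d ≠ 0 ∧ e ≠ 0 ∧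
          Matrix.BilinIsometric
            (pfisterMatrix F (fun i : Fin (m + 2) => α (Fin.castLE (by omega) i)))
            (pfisterMatrix F (Fin.snoc c d)) ∧
          Matrix.BilinIsometric
            (pfisterMatrix F
              (Fin.snoc (Fin.snoc (fun i : Fin m => α (Fin.castLE (by omega) i))
                (α ⟨m, by omega⟩ + 1)) (α ⟨m + 2, by omega⟩)))
            (pfisterMatrix F (Fin.snoc c e)) := by
  have h : m + 2 ≤ m + 3 := by omega
  have h' : m ≤ m + 3 := by omega
  have hm : m < m + 3 := by omega
  have hm2 : m + 2 < m + 3 := by omega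
  have hMφa : (pfisterMatrix F (fun i : Fin (m+2) => α (Fin.castLE h i))).BilinAnisotropic :=
    aniso_phi α haniso h
  have hMψa : (pfisterMatrix F (Fin.snoc (Fin.snoc (fun i : Fin m => α (Fin.castLE h' i))
      (α ⟨m, hm⟩ + 1)) (α ⟨m+2, hm2⟩))).BilinAnisotropic :=
    aniso_psi α haniso h' hm hm2
  refine ⟨hMφa, hMψa, ?_⟩
  rintro ⟨c, hc, d, e, hd, he, ⟨P, hPdet, hNφ⟩, ⟨Q, hQdet, hNψ⟩⟩
  obtain ⟨t, ht⟩ := alpha_mem_W h h' hm hm2 α haniso c d e P Q hPdet hQdet hNφ hNψ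
  -- notation
  have hne : (fun _ => false : Fin (m+2) → Bool)
      ≠ (fun i => decide (i = (Fin.last m).castSucc)) := by
    intro heq
    have := congrFun heq ((Fin.last m).castSucc)
    simp at this
  have symmφ : Matrix.transpose (pfisterMatrix F (fun i : Fin (m+2) => α (Fin.castLE h i)))
      = pfisterMatrix F (fun i : Fin (m+2) => α (Fin.castLE h i)) := by
    rw [pfister_eq]; exact Matrix.diagonal_transpose _
  have symmψ : Matrix.transpose (pfisterMatrix F (Fin.snoc (Fin.snoc
      (fun i : Fin m => α (Fin.castLE h' i)) (α ⟨m, hm⟩ + 1)) (α ⟨m+2, hm2⟩)))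
      = pfisterMatrix F (Fin.snoc (Fin.snoc (fun i : Fin m => α (Fin.castLE h' i))
      (α ⟨m, hm⟩ + 1)) (α ⟨m+2, hm2⟩)) := by
    rw [pfister_eq]; exact Matrix.diagonal_transpose _
  -- the various values of the associated quadratic maps
  have qMφ_u1 : dotProduct
      (fun f : Fin (m+2) → Bool => if f = (fun _ => false) then (1:F) else 0)
      ((pfisterMatrix F (fun i : Fin (m+2) => α (Fin.castLE h i))).mulVec
        (fun f => if f = (fun _ => false) then (1:F) else 0)) = 1 := by
    rw [pfister_eq, dot_delta]
    simp [prodIf_false]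
  have qMψ_u1 : dotProduct
      (fun f : Fin (m+2) → Bool => if f = (fun _ => false) then (1:F) else 0)
      ((pfisterMatrix F (Fin.snoc (Fin.snoc (fun i : Fin m => α (Fin.castLE h' i))
          (α ⟨m, hm⟩ + 1)) (α ⟨m+2, hm2⟩))).mulVec
        (fun f => if f = (fun _ => false) then (1:F) else 0)) = 1 := by
    rw [pfister_eq, dot_delta]
    simp [prodIf_false]
  have qNφ_u1 : dotProduct
      (fun f : Fin (m+2) → Bool => if f = (fun _ => false) then (1:F) else 0)
      ((pfisterMatrix F (Fin.snoc c d)).mulVec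
        (fun f => if f = (fun _ => false) then (1:F) else 0)) = 1 := by
    rw [pfister_eq, dot_delta]
    simp [prodIf_false]
  have qNψ_u1 : dotProduct
      (fun f : Fin (m+2) → Bool => if f = (fun _ => false) then (1:F) else 0)
      ((pfisterMatrix F (Fin.snoc c e)).mulVec
        (fun f => if f = (fun _ => false) then (1:F) else 0)) = 1 := by
    rw [pfister_eq, dot_delta]
    simp [prodIf_false]
  have qMφ_v : dotProduct
      (fun f : Fin (m+2) → Bool => (if f = (fun _ => false) then (1:F) else 0)
        + (if f = (fun i => decide (i = (Fin.last m).castSucc)) then 1 else 0))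
      ((pfisterMatrix F (fun i : Fin (m+2) => α (Fin.castLE h i))).mulVec
        (fun f => (if f = (fun _ => false) then (1:F) else 0)
          + (if f = (fun i => decide (i = (Fin.last m).castSucc)) then 1 else 0)))
      = α ⟨m, hm⟩ + 1 := by
    rw [pfister_eq, q_two _ hne, prodIf_false, prodIf_single]
    exact add_comm 1 _
  have qMψ_v : dotProduct
      (fun f : Fin (m+2) → Bool
        => if f = (fun i => decide (i = (Fin.last m).castSucc)) then (1:F) else 0)
      ((pfisterMatrix F (Fin.snoc (Fin.snoc (fun i : Fin m => α (Fin.castLE h' i))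
          (α ⟨m, hm⟩ + 1)) (α ⟨m+2, hm2⟩))).mulVec
        (fun f => if f = (fun i => decide (i = (Fin.last m).castSucc)) then (1:F) else 0))
      = α ⟨m, hm⟩ + 1 := by
    rw [pfister_eq, dot_delta, prodIf_single]
    simp [Fin.snoc_castSucc, Fin.snoc_last]
  have qNφ_v : dotProduct
      (fun f : Fin (m+2) → Bool => if f (Fin.last (m+1)) then 0 else t (Fin.init f))
      ((pfisterMatrix F (Fin.snoc c d)).mulVec
        (fun f => if f (Fin.last (m+1)) then 0 else t (Fin.init f)))
      = α ⟨m, hm⟩ + 1 := by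
    rw [pfister_eq, dot_diag, sum_snocB]
    refine Eq.trans (Finset.sum_congr rfl fun R _ => ?_) ht
    simp [prodIf_snoc_false, Fin.init_snoc, Fin.snoc_last]
  have qNψ_v : dotProduct
      (fun f : Fin (m+2) → Bool => if f (Fin.last (m+1)) then 0 else t (Fin.init f))
      ((pfisterMatrix F (Fin.snoc c e)).mulVec
        (fun f => if f (Fin.last (m+1)) then 0 else t (Fin.init f)))
      = α ⟨m, hm⟩ + 1 := by
    rw [pfister_eq, dot_diag, sum_snocB]
    refine Eq.trans (Finset.sum_congr rfl fun R _ => ?_) ht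
    simp [prodIf_snoc_false, Fin.init_snoc, Fin.snoc_last]
  -- the bilinear values
  have bMφ : dotProduct
      (fun f : Fin (m+2) → Bool => if f = (fun _ => false) then (1:F) else 0)
      ((pfisterMatrix F (fun i : Fin (m+2) => α (Fin.castLE h i))).mulVec
        (fun f => (if f = (fun _ => false) then (1:F) else 0)
          + (if f = (fun i => decide (i = (Fin.last m).castSucc)) then 1 else 0)))
      = 1 := by
    rw [pfister_eq, dot_delta, prodIf_false, if_pos rfl, if_neg hne]
    norm_num
  have bMψ : dotProduct
      (fun f : Fin (m+2) → Bool => if f = (fun _ => false) then (1:F) else 0)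
      ((pfisterMatrix F (Fin.snoc (Fin.snoc (fun i : Fin m => α (Fin.castLE h' i))
          (α ⟨m, hm⟩ + 1)) (α ⟨m+2, hm2⟩))).mulVec
        (fun f => if f = (fun i => decide (i = (Fin.last m).castSucc)) then (1:F) else 0))
      = 0 := by
    rw [pfister_eq, dot_delta, if_neg hne]
    ring
  have bNφ : dotProduct
      (fun f : Fin (m+2) → Bool => if f = (fun _ => false) then (1:F) else 0)
      ((pfisterMatrix F (Fin.snoc c d)).mulVec
        (fun f => if f (Fin.last (m+1)) then 0 else t (Fin.init f)))
      = t (Fin.init (fun _ => false)) := by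
    rw [pfister_eq, dot_delta, prodIf_false]
    simp
  have bNψ : dotProduct
      (fun f : Fin (m+2) → Bool => if f = (fun _ => false) then (1:F) else 0)
      ((pfisterMatrix F (Fin.snoc c e)).mulVec
        (fun f => if f (Fin.last (m+1)) then 0 else t (Fin.init f)))
      = t (Fin.init (fun _ => false)) := by
    rw [pfister_eq, dot_delta, prodIf_false]
    simp
  -- the two transfers
  have T1 := transfer hMφa symmφ hNφ _ _ _ _
    (qMφ_u1.trans qNφ_u1.symm) (qMφ_v.trans qNφ_v.symm)
  have T2 := transfer hMψa symmψ hNψ _ _ _ _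
    (qMψ_u1.trans qNψ_u1.symm) (qMψ_v.trans qNψ_v.symm)
  rw [bMφ, bNφ] at T1
  rw [bMψ, bNψ] at T2
  exact one_ne_zero (α := F) (T1.trans T2.symm)
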